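/- arXiv:1811.08031 — 2 statements merged into one kernel-verified Lean document; each statement's English description precedes it below -/
import Mathlib

section
/- For a finitely generated group G, define corank(G) as the largest r such that there exists a surjective group homomorphism from G onto the free group F_r of rank r. Then for any finitely generated groups G and H, corank(G × H) = max(corank(G), corank(H)). -/
open Subgroup Function

open Subgroup Function

private lemma perm_noncomm :
    ¬ Commute (Equiv.swap (0 : Fin 3) 1) (Equiv.swap (1 : Fin 3) 2) := by
  simp only [Commute, SemiconjBy]
  decide

private lemma noncomm_generic {F α : Type*} [Group F] (of' : α → F)
    (lft : ∀ f : α → Equiv.Perm (Fin 3), ∃ φ : F →* Equiv.Perm (Fin 3), ∀ x, φ (of' x) = f x)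
    {a b : α} (hab : a ≠ b) : ¬ Commute (of' a) (of' b) := by
  classical
  obtain ⟨φ, hφ⟩ := lft (fun i => if i = a then Equiv.swap 0 1 else Equiv.swap 1 2)
  intro h
  have h2 := h.map φ
  rw [hφ, hφ, if_pos rfl, if_neg hab.symm] at h2
  exact perm_noncomm h2

private lemma freeGroup_of_noncomm {α : Type*} {a b : α} (hab : a ≠ b) :
    ¬ Commute (FreeGroup.of a) (FreeGroup.of b) :=
  noncomm_generic FreeGroup.of (fun f => ⟨FreeGroup.lift f, fun _ => FreeGroup.lift_apply_of⟩) hab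

private lemma isFreeGroup_of_noncomm {F : Type*} [Group F] [IsFreeGroup F]
    {a b : IsFreeGroup.Generators F} (hab : a ≠ b) :
    ¬ Commute (IsFreeGroup.of a) (IsFreeGroup.of b) :=
  noncomm_generic IsFreeGroup.of (fun f => ⟨IsFreeGroup.lift f, IsFreeGroup.lift_of f⟩) hab
private lemma isFreeGroup_closure_range_of (F : Type*) [Group F] [IsFreeGroup F] :
    Subgroup.closure (Set.range (IsFreeGroup.of : IsFreeGroup.Generators F → F)) = ⊤ := by
  have h0 : (Set.range (IsFreeGroup.of : IsFreeGroup.Generators F → F))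
      = ⇑(IsFreeGroup.mulEquiv F).toMonoidHom '' (Set.range FreeGroup.of) := by
    rw [← Set.range_comp]; rfl
  rw [h0, ← MonoidHom.map_closure, FreeGroup.closure_range_of]
  exact Subgroup.map_top_of_surjective _ (MulEquiv.surjective _)

private lemma cyclic_of_subsingleton {F : Type*} [Group F] [IsFreeGroup F]
    (hs : Subsingleton (IsFreeGroup.Generators F)) :
    ∃ z : F, ∀ x : F, x ∈ Subgroup.zpowers z := by
  cases isEmpty_or_nonempty (IsFreeGroup.Generators F) with
  | inl he =>
    refine ⟨1, fun x => ?_⟩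
    have h1 := isFreeGroup_closure_range_of F
    rw [Set.range_eq_empty, Subgroup.closure_empty] at h1
    have : x ∈ (⊥ : Subgroup F) := h1 ▸ Subgroup.mem_top x
    simp [Subgroup.mem_bot.mp this]
  | inr hn =>
    obtain ⟨g⟩ := hn
    refine ⟨IsFreeGroup.of g, fun x => ?_⟩
    have h1 : Subgroup.closure (Set.range (IsFreeGroup.of : IsFreeGroup.Generators F → F))
        ≤ Subgroup.zpowers (IsFreeGroup.of g) := by
      rw [Subgroup.closure_le]
      rintro _ ⟨a, rfl⟩
      rw [Subsingleton.elim a g]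
      exact Subgroup.mem_zpowers _
    exact h1 (by rw [isFreeGroup_closure_range_of F]; trivial)

private lemma subsingleton_gens {F : Type*} [Group F] [IsFreeGroup F]
    (hcomm : ∀ x y : F, Commute x y) : Subsingleton (IsFreeGroup.Generators F) :=
  ⟨fun a b => by
    by_contra hab
    exact isFreeGroup_of_noncomm hab (hcomm _ _)⟩

private lemma commute_cyclic {F : Type*} [Group F] [IsFreeGroup F] {x y : F}
    (h : Commute x y) : ∃ z : F, x ∈ Subgroup.zpowers z ∧ y ∈ Subgroup.zpowers z := by
  set K := Subgroup.closure ({x, y} : Set F) with hK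
  have hxK : x ∈ K := Subgroup.subset_closure (by simp)
  have hyK : y ∈ K := Subgroup.subset_closure (by simp)
  have pair : ∀ p ∈ ({x, y} : Set F), ∀ q ∈ ({x, y} : Set F), Commute p q := by
    intro p hp q hq
    rcases hp with rfl | hp <;> rcases hq with rfl | hq
    · exact Commute.refl _
    · rw [Set.mem_singleton_iff] at hq; rw [hq]; exact h
    · rw [Set.mem_singleton_iff] at hp; rw [hp]; exact h.symm
    · rw [Set.mem_singleton_iff] at hp hq; rw [hp, hq]
  have h1 : K ≤ Subgroup.centralizer {x, y} := by
    rw [Subgroup.closure_le]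
    intro m hm
    rw [SetLike.mem_coe, Subgroup.mem_centralizer_iff]
    intro g hg
    exact pair g hg m hm
  have hx' : ∀ u ∈ K, Commute x u := by
    intro u hu
    have h2 := h1 hu
    rw [Subgroup.mem_centralizer_iff] at h2
    exact h2 x (by simp)
  have hy' : ∀ u ∈ K, Commute y u := by
    intro u hu
    have h2 := h1 hu
    rw [Subgroup.mem_centralizer_iff] at h2
    exact h2 y (by simp)
  have hcent : ∀ u ∈ K, ∀ v ∈ K, Commute u v := by
    intro u hu v hv
    have h2 : K ≤ Subgroup.centralizer {u} := by
      rw [Subgroup.closure_le]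
      intro m hm
      rw [SetLike.mem_coe, Subgroup.mem_centralizer_iff]
      intro g hg
      rw [Set.mem_singleton_iff] at hg
      rw [hg]
      rcases hm with rfl | hm
      · exact (hx' u hu).symm
      · rw [Set.mem_singleton_iff] at hm; rw [hm]; exact (hy' u hu).symm
    exact ((h2 hv) u rfl)
  have hcomm : ∀ u v : ↥K, Commute u v := by
    intro u v
    exact Subtype.ext (hcent u u.2 v v.2)
  obtain ⟨z0, hz0⟩ := cyclic_of_subsingleton (subsingleton_gens hcomm)
  refine ⟨(z0 : F), ?_, ?_⟩
  · obtain ⟨n, hn⟩ := hz0 ⟨x, hxK⟩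
    exact ⟨n, by simpa using congrArg Subtype.val hn⟩
  · obtain ⟨n, hn⟩ := hz0 ⟨y, hyK⟩
    exact ⟨n, by simpa using congrArg Subtype.val hn⟩
private lemma comm_of_center {F : Type*} [Group F] [IsFreeGroup F] {z : F} (hz1 : z ≠ 1)
    (hzc : ∀ w : F, Commute z w) : ∀ x y : F, Commute x y := by
  classical
  rcases subsingleton_or_nontrivial (IsFreeGroup.Generators F) with hs | hs
  · obtain ⟨c, hc⟩ := cyclic_of_subsingleton hs
    intro x y
    obtain ⟨m, hm⟩ := hc x
    obtain ⟨n, hn⟩ := hc y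
    rw [← hm, ← hn]
    exact (Commute.refl c).zpow_zpow m n
  · exfalso
    obtain ⟨a, b, hab⟩ := exists_pair_ne (IsFreeGroup.Generators F)
    set σ : IsFreeGroup.Generators F → F →* Multiplicative ℤ := fun t =>
      IsFreeGroup.lift (fun i => Multiplicative.ofAdd (if i = t then 1 else 0)) with hσ
    have hσof : ∀ t s, Multiplicative.toAdd (σ t (IsFreeGroup.of s))
        = (if s = t then 1 else 0) := by
      intro t s
      rw [hσ, IsFreeGroup.lift_of]
      rfl
    have key : ∀ (w target : F) (p : ℤ), w ^ p = target →
        ∀ t, (p * Multiplicative.toAdd (σ t w)) = Multiplicative.toAdd (σ t target) := by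
      intro w target p hw t
      rw [← hw, map_zpow, Int.toAdd_zpow, mul_comm]
    obtain ⟨u, hu1, hu2⟩ := commute_cyclic (hzc (IsFreeGroup.of a))
    obtain ⟨v, hv1, hv2⟩ := commute_cyclic (hzc (IsFreeGroup.of b))
    obtain ⟨p, hp'⟩ := hu1
    obtain ⟨k, hk'⟩ := hu2
    obtain ⟨q, hq'⟩ := hv1
    obtain ⟨l, hl'⟩ := hv2
    have hp : u ^ p = z := hp'
    have hk : u ^ k = IsFreeGroup.of a := hk'
    have hq : v ^ q = z := hq'
    have hl : v ^ l = IsFreeGroup.of b := hl'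
    have hka : k * Multiplicative.toAdd (σ a u) = 1 := by
      rw [key u (IsFreeGroup.of a) k hk a, hσof, if_pos rfl]
    have hlb : l * Multiplicative.toAdd (σ b v) = 1 := by
      rw [key v (IsFreeGroup.of b) l hl b, hσof, if_pos rfl]
    have hla : l * Multiplicative.toAdd (σ a v) = 0 := by
      rw [key v (IsFreeGroup.of b) l hl a, hσof, if_neg (Ne.symm hab)]
    have hl0 : l ≠ 0 := by
      intro h0; rw [h0, zero_mul] at hlb; exact one_ne_zero hlb.symm
    have hCa : Multiplicative.toAdd (σ a v) = 0 :=
      (mul_eq_zero.mp hla).resolve_left hl0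
    have hA0 : Multiplicative.toAdd (σ a u) ≠ 0 := by
      intro h0; rw [h0, mul_zero] at hka; exact one_ne_zero hka.symm
    have hza : Multiplicative.toAdd (σ a z) = 0 := by
      rw [← key v z q hq a, hCa, mul_zero]
    have hpA : p * Multiplicative.toAdd (σ a u) = 0 := by
      rw [key u z p hp a, hza]
    have hp0 : p = 0 := (mul_eq_zero.mp hpA).resolve_right hA0
    apply hz1
    rw [hp0, zpow_zero] at hp
    exact hp.symm

private lemma commute_trans {F : Type*} [Group F] [IsFreeGroup F] {x y w : F} (hx : x ≠ 1)
    (h1 : Commute x y) (h2 : Commute x w) : Commute y w := by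
  set K := Subgroup.closure ({x, y, w} : Set F) with hKdef
  have hxK : x ∈ K := Subgroup.subset_closure (by simp)
  have hyK : y ∈ K := Subgroup.subset_closure (by simp)
  have hwK : w ∈ K := Subgroup.subset_closure (by simp)
  have hcent : K ≤ Subgroup.centralizer {x} := by
    rw [Subgroup.closure_le]
    intro m hm
    rw [SetLike.mem_coe, Subgroup.mem_centralizer_iff]
    intro g hg
    rw [Set.mem_singleton_iff] at hg
    rw [hg]
    rcases hm with rfl | hm
    · rfl
    rcases hm with rfl | hm
    · exact h1
    · rw [Set.mem_singleton_iff] at hm; rw [hm]; exact h2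
  have hz1 : (⟨x, hxK⟩ : ↥K) ≠ 1 := by
    intro hcontra
    exact hx (congrArg Subtype.val hcontra)
  have hzc : ∀ u : ↥K, Commute (⟨x, hxK⟩ : ↥K) u := by
    intro u
    have h3 := hcent u.2
    rw [Subgroup.mem_centralizer_iff] at h3
    exact Subtype.ext (by simpa using h3 x rfl)
  have hres := comm_of_center hz1 hzc ⟨y, hyK⟩ ⟨w, hwK⟩
  have := congrArg Subtype.val hres
  exact this
private lemma corank_bddAbove (G : Type*) [Group G] [Group.FG G] :
    BddAbove {r : ℕ | ∃ f : G →* FreeGroup (Fin r), Surjective f} := by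
  classical
  obtain ⟨S, -, hS⟩ := Group.rank_spec G
  refine ⟨S.card, fun r hr => ?_⟩
  obtain ⟨f, hf⟩ := hr
  haveI : Fact (Nat.Prime 2) := ⟨by norm_num⟩
  set V := Fin r → ZMod 2
  set φ : FreeGroup (Fin r) →* Multiplicative V :=
    FreeGroup.lift (fun i => Multiplicative.ofAdd (Pi.single i 1)) with hφdef
  set ψ := φ.comp f with hψdef
  set T : Finset V := S.image (fun g => Multiplicative.toAdd (ψ g)) with hT
  have stepA : ∀ g : G, Multiplicative.toAdd (ψ g) ∈ Submodule.span (ZMod 2) (T : Set V) := by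
    intro g
    have hg : g ∈ Subgroup.closure (S : Set G) := by rw [hS]; trivial
    induction hg using Subgroup.closure_induction with
    | mem g hgS => exact Submodule.subset_span (Finset.mem_image_of_mem _ hgS)
    | one => rw [map_one]; exact Submodule.zero_mem _
    | mul g g' _ _ ih ih' => rw [map_mul]; exact Submodule.add_mem _ ih ih'
    | inv g _ ih => rw [map_inv]; exact Submodule.neg_mem _ ih
  have stepB : Submodule.span (ZMod 2) (T : Set V) = ⊤ := by
    rw [Submodule.eq_top_iff']
    intro v
    rw [← Finset.univ_sum_single v]
    refine Submodule.sum_mem _ fun i _ => ?_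
    have h1 : (Pi.single i (v i) : V) = (v i) • (Pi.single i 1 : V) := by
      rw [← Pi.single_smul, smul_eq_mul, mul_one]
    rw [h1]
    refine Submodule.smul_mem _ _ ?_
    have h2 : (Pi.single i 1 : V) = Multiplicative.toAdd (ψ (Classical.choose (hf (FreeGroup.of i)))) := by
      rw [hψdef]
      simp only [MonoidHom.comp_apply]
      rw [Classical.choose_spec (hf (FreeGroup.of i))]
      rw [hφdef, FreeGroup.lift_apply_of]
      rfl
    rw [h2]
    exact stepA _
  have hrank : r = Module.finrank (ZMod 2) V := by
    rw [Module.finrank_pi (ZMod 2)]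
    simp
  rw [hrank]
  calc Module.finrank (ZMod 2) V
      = Module.finrank (ZMod 2) (⊤ : Submodule (ZMod 2) V) := (finrank_top _ _).symm
    _ = Module.finrank (ZMod 2) (Submodule.span (ZMod 2) (T : Set V)) := by rw [stepB]
    _ ≤ T.card := finrank_span_finset_le_card T
    _ ≤ S.card := Finset.card_image_le

private lemma fg_prod_aux (G H : Type*) [Group G] [Group H] [Group.FG G] [Group.FG H] :
    Group.FG (G × H) := by
  obtain ⟨SG, -, hSG⟩ := Group.rank_spec G
  obtain ⟨SH, -, hSH⟩ := Group.rank_spec H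
  rw [Group.fg_iff]
  refine ⟨((MonoidHom.inl G H) '' SG) ∪ ((MonoidHom.inr G H) '' SH), ?_, ?_⟩
  · rw [eq_top_iff]
    rintro ⟨g, h⟩ -
    have hg : (g, (1 : H)) ∈ Subgroup.closure (((MonoidHom.inl G H) '' SG) ∪ ((MonoidHom.inr G H) '' SH)) := by
      have : (g, (1 : H)) ∈ Subgroup.map (MonoidHom.inl G H) (Subgroup.closure (SG : Set G)) := by
        rw [hSG]
        exact ⟨g, trivial, rfl⟩
      rw [MonoidHom.map_closure] at this
      exact Subgroup.closure_mono Set.subset_union_left this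
    have hh : ((1 : G), h) ∈ Subgroup.closure (((MonoidHom.inl G H) '' SG) ∪ ((MonoidHom.inr G H) '' SH)) := by
      have : ((1 : G), h) ∈ Subgroup.map (MonoidHom.inr G H) (Subgroup.closure (SH : Set H)) := by
        rw [hSH]
        exact ⟨h, trivial, rfl⟩
      rw [MonoidHom.map_closure] at this
      exact Subgroup.closure_mono Set.subset_union_right this
    have : (g, h) = (g, (1:H)) * ((1:G), h) := by simp
    rw [this]
    exact Subgroup.mul_mem _ hg hh
  · exact Set.Finite.union (SG.finite_toSet.image _) (SH.finite_toSet.image _)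
private lemma zero_mem_corank (K : Type*) [Group K] :
    ∃ f : K →* FreeGroup (Fin 0), Surjective f := by
  refine ⟨1, fun y => ⟨1, ?_⟩⟩
  have h1 := FreeGroup.closure_range_of (Fin 0)
  rw [Set.range_eq_empty, Subgroup.closure_empty] at h1
  have : y ∈ (⊥ : Subgroup _) := h1 ▸ Subgroup.mem_top y
  simpa using (Subgroup.mem_bot.mp this).symm

private lemma corank_key {G H : Type*} [Group G] [Group H] {s : ℕ}
    (f : (G × H) →* FreeGroup (Fin s)) (hf : Surjective f) :
    (∃ g : G →* FreeGroup (Fin s), Surjective g) ∨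
      (∃ g : H →* FreeGroup (Fin s), Surjective g) := by
  classical
  by_cases hB : (f.comp (MonoidHom.inr G H)).range = ⊥
  · left
    refine ⟨f.comp (MonoidHom.inl G H), fun x => ?_⟩
    obtain ⟨⟨g0, h0⟩, rfl⟩ := hf x
    refine ⟨g0, ?_⟩
    have hb : f ((1 : G), h0) = 1 := by
      have : f ((1 : G), h0) ∈ (f.comp (MonoidHom.inr G H)).range := ⟨h0, rfl⟩
      rw [hB] at this
      exact Subgroup.mem_bot.mp this
    calc (f.comp (MonoidHom.inl G H)) g0 = f ((g0, 1) * ((1 : G), h0)) := by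
          rw [map_mul]
          simp only [MonoidHom.comp_apply, MonoidHom.inl_apply, hb, mul_one]
      _ = f (g0, h0) := by rw [Prod.mk_mul_mk, mul_one, one_mul]
  by_cases hA : (f.comp (MonoidHom.inl G H)).range = ⊥
  · right
    refine ⟨f.comp (MonoidHom.inr G H), fun x => ?_⟩
    obtain ⟨⟨g0, h0⟩, rfl⟩ := hf x
    refine ⟨h0, ?_⟩
    have ha : f (g0, (1 : H)) = 1 := by
      have : f (g0, (1 : H)) ∈ (f.comp (MonoidHom.inl G H)).range := ⟨g0, rfl⟩
      rw [hA] at this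
      exact Subgroup.mem_bot.mp this
    calc (f.comp (MonoidHom.inr G H)) h0 = f ((g0, (1:H)) * ((1 : G), h0)) := by
          rw [map_mul]
          simp only [MonoidHom.comp_apply, MonoidHom.inr_apply, ha, one_mul]
      _ = f (g0, h0) := by rw [Prod.mk_mul_mk, mul_one, one_mul]
  -- both ranges nontrivial
  obtain ⟨a0, ha0A, ha0⟩ : ∃ x ∈ (f.comp (MonoidHom.inl G H)).range, x ≠ 1 := by
    by_contra hcon
    push_neg at hcon
    exact hA ((Subgroup.eq_bot_iff_forall _).mpr hcon)
  obtain ⟨b0, hb0B, hb0⟩ : ∃ x ∈ (f.comp (MonoidHom.inr G H)).range, x ≠ 1 := by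
    by_contra hcon
    push_neg at hcon
    exact hB ((Subgroup.eq_bot_iff_forall _).mpr hcon)
  obtain ⟨ga, hga⟩ := ha0A
  obtain ⟨hb, hhb⟩ := hb0B
  have hABcomm : ∀ (g : G) (h : H), Commute (f (g, 1)) (f ((1:G), h)) := by
    intro g h
    have hmm : ((g, (1:H)) : G × H) * ((1:G), h) = ((1:G), h) * (g, (1:H)) := by
      rw [Prod.mk_mul_mk, Prod.mk_mul_mk, mul_one, one_mul, mul_one, one_mul]
    unfold Commute SemiconjBy
    rw [← map_mul, ← map_mul, hmm]
  have hFcomm : ∀ x y : FreeGroup (Fin s), Commute x y := by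
    intro x y
    obtain ⟨⟨g1, h1⟩, rfl⟩ := hf x
    obtain ⟨⟨g2, h2⟩, rfl⟩ := hf y
    have haa : Commute (f (g1, 1)) (f (g2, 1)) := by
      refine commute_trans (x := f ((1:G), hb)) ?_ ?_ ?_
      · have heq : f ((1:G), hb) = b0 := hhb
        rw [heq]; exact hb0
      · exact (hABcomm g1 hb).symm
      · exact (hABcomm g2 hb).symm
    have hbb : Commute (f ((1:G), h1)) (f ((1:G), h2)) := by
      refine commute_trans (x := f (ga, (1:H))) ?_ ?_ ?_
      · have heq : f (ga, (1:H)) = a0 := hga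
        rw [heq]; exact ha0
      · exact hABcomm ga h1
      · exact hABcomm ga h2
    have e1 : f (g1, h1) = f (g1, 1) * f ((1:G), h1) := by
      rw [← map_mul, Prod.mk_mul_mk, mul_one, one_mul]
    have e2 : f (g2, h2) = f (g2, 1) * f ((1:G), h2) := by
      rw [← map_mul, Prod.mk_mul_mk, mul_one, one_mul]
    rw [e1, e2]
    have c1 : Commute (f (g1, 1)) (f (g2, 1) * f ((1:G), h2)) :=
      haa.mul_right (hABcomm g1 h2)
    have c2 : Commute (f ((1:G), h1)) (f (g2, 1) * f ((1:G), h2)) :=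
      ((hABcomm g2 h1).symm).mul_right hbb
    exact c1.mul_left c2
  match s, f, hf, hFcomm with
  | 0, f, hf, hFcomm => exact Or.inl (zero_mem_corank G)
  | (n+2), f, hf, hFcomm =>
    exfalso
    have hne : (⟨0, by omega⟩ : Fin (n+2)) ≠ ⟨1, by omega⟩ := by simp [Fin.ext_iff]
    exact freeGroup_of_noncomm hne (hFcomm _ _)
  | 1, f, hf, hFcomm =>
    left
    set A := (f.comp (MonoidHom.inl G H)).range with hAdef
    have hAne : A ≠ ⊥ := hA
    haveI : IsFreeGroup ↥A := inferInstance
    have hAcomm : ∀ u v : ↥A, Commute u v := fun u v =>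
      Subtype.ext (hFcomm (u : FreeGroup (Fin 1)) v)
    haveI hsub : Subsingleton (IsFreeGroup.Generators ↥A) := subsingleton_gens hAcomm
    have hnonempty : Nonempty (IsFreeGroup.Generators ↥A) := by
      by_contra hcon
      rw [not_nonempty_iff] at hcon
      apply hAne
      rw [Subgroup.eq_bot_iff_forall]
      intro x hx
      have h1 := isFreeGroup_closure_range_of ↥A
      rw [Set.range_eq_empty, Subgroup.closure_empty] at h1
      have h2 : (⟨x, hx⟩ : ↥A) ∈ (⊥ : Subgroup ↥A) := h1 ▸ Subgroup.mem_top _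
      exact congrArg Subtype.val (Subgroup.mem_bot.mp h2)
    haveI : Unique (IsFreeGroup.Generators ↥A) :=
      uniqueOfSubsingleton (Classical.choice hnonempty)
    let eqv : IsFreeGroup.Generators ↥A ≃ Fin 1 := Equiv.ofUnique _ _
    let e : ↥A ≃* FreeGroup (Fin 1) :=
      (IsFreeGroup.toFreeGroup ↥A).trans (FreeGroup.freeGroupCongr eqv)
    refine ⟨e.toMonoidHom.comp (f.comp (MonoidHom.inl G H)).rangeRestrict, ?_⟩
    exact e.surjective.comp (f.comp (MonoidHom.inl G H)).rangeRestrict_surjective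
/-- The corank of a group `G`: the largest `r` such that there exists an epimorphism
from `G` onto the free group of rank `r`. -/
noncomputable def corank (G : Type*) [Group G] : ℕ :=
  sSup {r : ℕ | ∃ f : G →* FreeGroup (Fin r), Function.Surjective f}

/-- For finitely generated groups `G` and `H`,
`corank(G × H) = max(corank(G), corank(H))`. -/
theorem corank_prod (G H : Type*) [Group G] [Group H] [Group.FG G] [Group.FG H] :
    corank (G × H) = max (corank G) (corank H) := by
  classical
  haveI : Group.FG (G × H) := fg_prod_aux G H
  have hbG := corank_bddAbove G
  have hbH := corank_bddAbove H
  have hbGH := corank_bddAbove (G × H)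
  unfold corank
  apply le_antisymm
  · refine csSup_le ⟨0, zero_mem_corank _⟩ ?_
    rintro s ⟨f, hf⟩
    rcases corank_key f hf with hg | hg
    · exact le_trans (le_csSup hbG hg) (le_max_left _ _)
    · exact le_trans (le_csSup hbH hg) (le_max_right _ _)
  · refine max_le (csSup_le ⟨0, zero_mem_corank _⟩ ?_) (csSup_le ⟨0, zero_mem_corank _⟩ ?_)
    · rintro s ⟨g, hg⟩
      exact le_csSup hbGH ⟨g.comp (MonoidHom.fst G H), hg.comp Prod.fst_surjective⟩
    · rintro s ⟨g, hg⟩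
      exact le_csSup hbGH ⟨g.comp (MonoidHom.snd G H), hg.comp Prod.snd_surjective⟩
end

section
/- For finitely generated groups G and H, corank(G ∗ H) = corank(G) + corank(H), where G ∗ H denotes the free product. -/
open scoped Monoid.Coprod

open Function

namespace CorankAux

/-- The set of coranks. -/
def corankSet (G : Type*) [Group G] : Set ℕ :=
  {r : ℕ | ∃ f : G →* FreeGroup (Fin r), Function.Surjective f}

lemma zero_mem_corankSet (G : Type*) [Group G] : 0 ∈ corankSet G :=
  ⟨1, fun y => ⟨1, Subsingleton.elim _ _⟩⟩

/-- Every finitely generated group is a quotient of a finitely generated free group. -/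
lemma exists_surjective_freeGroup (G : Type*) [Group G] [Group.FG G] :
    ∃ (n : ℕ) (p : FreeGroup (Fin n) →* G), Surjective p := by
  obtain ⟨n, S, -, hclos⟩ := Group.fg_iff'.1 ‹Group.FG G›
  refine ⟨S.card, FreeGroup.lift (fun i => ((S.equivFin.symm i : S) : G)), ?_⟩
  rw [← MonoidHom.range_eq_top, FreeGroup.range_lift_eq_closure]
  have hrange : Set.range (fun i => ((S.equivFin.symm i : S) : G)) = (S : Set G) := by
    ext x
    constructor
    · rintro ⟨i, rfl⟩; exact (S.equivFin.symm i).2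
    · intro hx; exact ⟨S.equivFin ⟨x, hx⟩, by simp⟩
  rw [hrange, hclos]

/-- If there is a surjection between free groups, the target basis is not bigger. -/
lemma card_le_of_surjective {α β : Type} (f : FreeGroup α →* FreeGroup β)
    (hf : Surjective f) : Cardinal.mk β ≤ Cardinal.mk α := by
  -- abelianization of a surjection is surjective
  have hof : ∀ {γ : Type} [Group γ], Surjective (Abelianization.of : γ → Abelianization γ) :=
    fun {γ} _ y => Quotient.inductionOn y fun g => ⟨g, rfl⟩
  have hmap : Surjective (Abelianization.map f) := by
    intro y
    obtain ⟨x, rfl⟩ := hof y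
    obtain ⟨z, rfl⟩ := hf x
    exact ⟨Abelianization.of z, Abelianization.map_of (f := f) z⟩
  -- view it as a surjective `ℤ`-linear map between finsupps
  let F : FreeAbelianGroup α →+ FreeAbelianGroup β :=
    MonoidHom.toAdditive (Abelianization.map f)
  have hF : Surjective F := hmap
  let L : (α →₀ ℤ) →+ (β →₀ ℤ) :=
    ((FreeAbelianGroup.equivFinsupp β).toAddMonoidHom.comp F).comp
      (FreeAbelianGroup.equivFinsupp α).symm.toAddMonoidHom
  have hL : Surjective L :=
    (FreeAbelianGroup.equivFinsupp β).surjective.comp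
      (hF.comp (FreeAbelianGroup.equivFinsupp α).symm.surjective)
  have := LinearMap.rank_le_of_surjective L.toIntLinearMap hL
  rwa [rank_finsupp_self', rank_finsupp_self'] at this

lemma mem_bound {G : Type*} [Group G] {n : ℕ} {p : FreeGroup (Fin n) →* G}
    (hp : Surjective p) {r : ℕ} (hr : r ∈ corankSet G) : r ≤ n := by
  obtain ⟨f, hf⟩ := hr
  have := card_le_of_surjective (f.comp p) (hf.comp hp)
  simpa using this

lemma bddAbove_corankSet (G : Type*) [Group G] [Group.FG G] :
    BddAbove (corankSet G) := by
  obtain ⟨n, p, hp⟩ := exists_surjective_freeGroup G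
  exact ⟨n, fun r hr => mem_bound hp hr⟩

lemma corank_mem (G : Type*) [Group G] [Group.FG G] :
    sSup (corankSet G) ∈ corankSet G :=
  Nat.sSup_mem ⟨0, zero_mem_corankSet G⟩ (bddAbove_corankSet G)

/-- A finitely generated subgroup of a free group is a finite-rank free group. -/
lemma exists_rank {r : ℕ} (A : Subgroup (FreeGroup (Fin r))) [hA : Group.FG A] :
    ∃ (a : ℕ), Nonempty (A ≃* FreeGroup (Fin a)) := by
  have : Group.FG (FreeGroup (IsFreeGroup.Generators A)) :=
    Group.fg_of_surjective (f := (IsFreeGroup.toFreeGroup A).toMonoidHom)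
      (IsFreeGroup.toFreeGroup A).surjective
  obtain ⟨n, p, hp⟩ := exists_surjective_freeGroup (FreeGroup (IsFreeGroup.Generators A))
  have hcard : Cardinal.mk (IsFreeGroup.Generators A) ≤ n := by
    simpa using card_le_of_surjective p hp
  have hfin : Finite (IsFreeGroup.Generators A) := by
    rw [← Cardinal.lt_aleph0_iff_finite]
    exact hcard.trans_lt (Cardinal.nat_lt_aleph0 n)
  have : Fintype (IsFreeGroup.Generators A) := Fintype.ofFinite _
  exact ⟨Fintype.card (IsFreeGroup.Generators A),
    ⟨(IsFreeGroup.toFreeGroup A).trans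
      (FreeGroup.freeGroupCongr (Fintype.equivFin _))⟩⟩

/-- The range of a hom from a free group is the closure of the images of generators. -/
lemma range_eq_closure_range {α K : Type*} [Group K] (q : FreeGroup α →* K) :
    q.range = Subgroup.closure (Set.range (fun i => q (FreeGroup.of i))) := by
  rw [MonoidHom.range_eq_map, ← FreeGroup.closure_range_of α, MonoidHom.map_closure,
    ← Set.range_comp]
  rfl

variable {G H : Type*} [Group G] [Group H]

lemma mem_add [Group.FG G] [Group.FG H] {a b : ℕ}
    (ha : a ∈ corankSet G) (hb : b ∈ corankSet H) :
    a + b ∈ corankSet (Monoid.Coprod G H) := by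
  obtain ⟨f, hf⟩ := ha
  obtain ⟨g, hg⟩ := hb
  let jl : FreeGroup (Fin a) →* FreeGroup (Fin a ⊕ Fin b) :=
    FreeGroup.lift fun i => FreeGroup.of (Sum.inl i)
  let jr : FreeGroup (Fin b) →* FreeGroup (Fin a ⊕ Fin b) :=
    FreeGroup.lift fun j => FreeGroup.of (Sum.inr j)
  let Φ : Monoid.Coprod G H →* FreeGroup (Fin a ⊕ Fin b) :=
    Monoid.Coprod.lift (jl.comp f) (jr.comp g)
  have hΦ : Φ.range = ⊤ := by
    rw [Monoid.Coprod.range_eq, Monoid.Coprod.lift_comp_inl, Monoid.Coprod.lift_comp_inr,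
      ← MonoidHom.map_range jl f, ← MonoidHom.map_range jr g,
      MonoidHom.range_eq_top.2 hf, MonoidHom.range_eq_top.2 hg,
      ← MonoidHom.range_eq_map, ← MonoidHom.range_eq_map,
      range_eq_closure_range jl, range_eq_closure_range jr, ← Subgroup.closure_union]
    have hunion : (Set.range fun i => jl (FreeGroup.of i)) ∪
        (Set.range fun j => jr (FreeGroup.of j)) =
        Set.range (FreeGroup.of : Fin a ⊕ Fin b → FreeGroup (Fin a ⊕ Fin b)) := by
      have hfun : (Sum.elim (fun i => jl (FreeGroup.of i)) fun j => jr (FreeGroup.of j)) =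
          (FreeGroup.of : Fin a ⊕ Fin b → FreeGroup (Fin a ⊕ Fin b)) := by
        funext x
        cases x <;> simp [jl, jr]
      rw [← Set.Sum.elim_range, hfun]
    rw [hunion, FreeGroup.closure_range_of]
  have hΦs : Surjective Φ := MonoidHom.range_eq_top.1 hΦ
  exact ⟨(FreeGroup.freeGroupCongr finSumFinEquiv).toMonoidHom.comp Φ,
    (FreeGroup.freeGroupCongr finSumFinEquiv).surjective.comp hΦs⟩

lemma upper [Group.FG G] [Group.FG H] {r : ℕ}
    (hr : r ∈ corankSet (Monoid.Coprod G H)) :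
    r ≤ sSup (corankSet G) + sSup (corankSet H) := by
  obtain ⟨ψ, hψ⟩ := hr
  set A := (ψ.comp Monoid.Coprod.inl).range with hAdef
  set B := (ψ.comp Monoid.Coprod.inr).range with hBdef
  obtain ⟨a, ⟨eA⟩⟩ := exists_rank A
  obtain ⟨b, ⟨eB⟩⟩ := exists_rank B
  have haG : a ∈ corankSet G :=
    ⟨eA.toMonoidHom.comp (ψ.comp Monoid.Coprod.inl).rangeRestrict,
      eA.surjective.comp (ψ.comp Monoid.Coprod.inl).rangeRestrict_surjective⟩
  have hbH : b ∈ corankSet H :=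
    ⟨eB.toMonoidHom.comp (ψ.comp Monoid.Coprod.inr).rangeRestrict,
      eB.surjective.comp (ψ.comp Monoid.Coprod.inr).rangeRestrict_surjective⟩
  let qA : FreeGroup (Fin a) →* FreeGroup (Fin r) := A.subtype.comp eA.symm.toMonoidHom
  let qB : FreeGroup (Fin b) →* FreeGroup (Fin r) := B.subtype.comp eB.symm.toMonoidHom
  have hqA : qA.range = A := by
    rw [show qA.range = (A.subtype.comp eA.symm.toMonoidHom).range from rfl,
      ← MonoidHom.map_range, MonoidHom.range_eq_top.2 eA.symm.surjective,
      ← MonoidHom.range_eq_map, Subgroup.range_subtype]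
  have hqB : qB.range = B := by
    rw [show qB.range = (B.subtype.comp eB.symm.toMonoidHom).range from rfl,
      ← MonoidHom.map_range, MonoidHom.range_eq_top.2 eB.symm.surjective,
      ← MonoidHom.range_eq_map, Subgroup.range_subtype]
  let Φ : FreeGroup (Fin a ⊕ Fin b) →* FreeGroup (Fin r) :=
    FreeGroup.lift (Sum.elim (fun i => qA (FreeGroup.of i)) (fun j => qB (FreeGroup.of j)))
  have hΦ : Φ.range = ⊤ := by
    rw [show Φ.range = (FreeGroup.lift (Sum.elim (fun i => qA (FreeGroup.of i))
        (fun j => qB (FreeGroup.of j)))).range from rfl,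
      FreeGroup.range_lift_eq_closure, Set.Sum.elim_range, Subgroup.closure_union,
      ← range_eq_closure_range qA, ← range_eq_closure_range qB, hqA, hqB,
      hAdef, hBdef, ← Monoid.Coprod.range_eq, MonoidHom.range_eq_top.2 hψ]
  have hΦs : Surjective Φ := MonoidHom.range_eq_top.1 hΦ
  have hsurj : Surjective (Φ.comp (FreeGroup.freeGroupCongr finSumFinEquiv.symm).toMonoidHom) :=
    hΦs.comp (FreeGroup.freeGroupCongr finSumFinEquiv.symm).surjective
  have hle := card_le_of_surjective _ hsurj
  simp only [Cardinal.mk_fin, Nat.cast_le] at hle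
  exact hle.trans (add_le_add (le_csSup (bddAbove_corankSet G) haG)
    (le_csSup (bddAbove_corankSet H) hbH))

end CorankAux

/-- For finitely generated groups `G` and `H`,
`corank(G ∗ H) = corank(G) + corank(H)`, where `G ∗ H` is the free product. -/
theorem corank_coprod (G H : Type*) [Group G] [Group H] [Group.FG G] [Group.FG H] :
    corank (Monoid.Coprod G H) = corank G + corank H := by
  have h1 : corank G + corank H ∈ CorankAux.corankSet (Monoid.Coprod G H) :=
    CorankAux.mem_add (CorankAux.corank_mem G) (CorankAux.corank_mem H)
  have hub : ∀ r ∈ CorankAux.corankSet (Monoid.Coprod G H), r ≤ corank G + corank H :=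
    fun r hr => CorankAux.upper hr
  exact le_antisymm (csSup_le ⟨_, h1⟩ hub) (le_csSup ⟨_, hub⟩ h1)
end
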